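/- In the setting of the previous recursion, define for 0 ≤ p ≤ m: S¹ = Σ_{i=p}^m h_i, S² = Σ_{i=p}^m h_i², and the averaged point x_{p,m} = (1/S¹)·Σ_{i=p}^m h_i x_{i+1}. Then the merit function μ_Q(x_{p,m}) = sup_{x∈Q} ⟨V(x), x_{p,m} - x⟩ satisfies μ_Q(x_{p,m}) ≤ (1 + L²S²)·D²/(2S¹). -/

import Mathlib

open RealInnerProductSpace

theorem stmt_10 {n : ℕ} (V : EuclideanSpace ℝ (Fin n) → EuclideanSpace ℝ (Fin n))
    (Q : Set (EuclideanSpace ℝ (Fin n)))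
    (L D : ℝ) (hL : 0 ≤ L) (hD : 0 < D)
    (hQc : IsClosed Q) (hQconv : Convex ℝ Q)
    (hmono : ∀ x ∈ Q, ∀ y ∈ Q, 0 ≤ ⟪V x - V y, x - y⟫)
    (hLip : ∀ x ∈ Q, ∀ y ∈ Q, ‖V x - V y‖ ≤ L * ‖x - y‖)
    (xstar : EuclideanSpace ℝ (Fin n)) (hxstar : xstar ∈ Q)
    (hdiam : ∀ x ∈ Q, ‖x - xstar‖ ≤ D)
    (x : ℕ → EuclideanSpace ℝ (Fin n)) (h : ℕ → ℝ)
    (hh : ∀ k, 0 < h k) (hxQ : ∀ k, x k ∈ Q)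
    (hdiam' : ∀ y ∈ Q, ∀ k, ‖y - x k‖ ≤ D)
    (hrec : ∀ k, ∀ y ∈ Q,
      ‖y - x (k+1)‖^2 ≤ ‖y - x k‖^2 + 2 * h k * ⟪V y, y - x (k+1)⟫ + (h k)^2 * L^2 * D^2)
    (p m : ℕ) (hpm : p ≤ m)
    (S1 S2 : ℝ)
    (hS1 : S1 = ∑ i ∈ Finset.Icc p m, h i)
    (hS2 : S2 = ∑ i ∈ Finset.Icc p m, (h i)^2)
    (xavg : EuclideanSpace ℝ (Fin n))
    (hxavg : xavg = (1 / S1) • ∑ i ∈ Finset.Icc p m, h i • x (i+1)) :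
    sSup {z : ℝ | ∃ y ∈ Q, z = ⟪V y, xavg - y⟫} ≤ (1 + L^2 * S2) * D^2 / (2 * S1) := by
  have hS1pos : 0 < S1 := by
    rw [hS1]
    exact Finset.sum_pos (fun i _ => hh i) (Finset.nonempty_Icc.2 hpm)
  have hS2nn : 0 ≤ S2 := by
    rw [hS2]; positivity
  have hbnn : 0 ≤ (1 + L^2 * S2) * D^2 / (2 * S1) := by positivity
  apply Real.sSup_le _ hbnn
  rintro z ⟨y, hy, rfl⟩
  -- express the inner product as an average
  have hxy : xavg - y = (1 / S1) • ∑ i ∈ Finset.Icc p m, h i • (x (i+1) - y) := by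
    rw [hxavg]
    have : ∑ i ∈ Finset.Icc p m, h i • (x (i+1) - y)
        = (∑ i ∈ Finset.Icc p m, h i • x (i+1)) - S1 • y := by
      rw [hS1, Finset.sum_smul]
      simp [smul_sub, Finset.sum_sub_distrib]
    rw [this, smul_sub, smul_smul, one_div, inv_mul_cancel₀ hS1pos.ne', one_smul]
  have hinner : ⟪V y, xavg - y⟫ = (1 / S1) * ∑ i ∈ Finset.Icc p m, h i * ⟪V y, x (i+1) - y⟫ := by
    rw [hxy, real_inner_smul_right, inner_sum]
    congr 1
    exact Finset.sum_congr rfl (fun i _ => real_inner_smul_right _ _ _)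
  -- per-step bound
  have key : ∀ i, 2 * (h i * ⟪V y, x (i+1) - y⟫) ≤
      (‖y - x i‖^2 - ‖y - x (i+1)‖^2) + (h i)^2 * L^2 * D^2 := by
    intro i
    have h1 := hrec i y hy
    have h2 : ⟪V y, y - x (i+1)⟫ = - ⟪V y, x (i+1) - y⟫ := by
      rw [← inner_neg_right]; congr 1; abel
    rw [h2] at h1
    nlinarith [h1]
  -- sum the bound
  have hsum : ∑ i ∈ Finset.Icc p m, 2 * (h i * ⟪V y, x (i+1) - y⟫) ≤
      (‖y - x p‖^2 - ‖y - x (m+1)‖^2) + L^2 * D^2 * S2 := by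
    have := Finset.sum_le_sum (fun i (_ : i ∈ Finset.Icc p m) => key i)
    refine this.trans (le_of_eq ?_)
    rw [Finset.sum_add_distrib]
    congr 1
    · -- telescoping
      have htel : ∑ i ∈ Finset.Icc p m, (‖y - x i‖^2 - ‖y - x (i+1)‖^2)
          = ‖y - x p‖^2 - ‖y - x (m+1)‖^2 := by
        rw [← Finset.Ico_add_one_right_eq_Icc, Finset.sum_Ico_eq_sub _ (n := m + 1) (Nat.le_succ_of_le hpm),
          Finset.sum_range_sub' (fun i => ‖y - x i‖^2),
          Finset.sum_range_sub' (fun i => ‖y - x i‖^2)]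
        ring
      exact htel
    · rw [hS2, Finset.mul_sum]
      exact Finset.sum_congr rfl (fun i _ => by ring)
  have hDp : ‖y - x p‖^2 ≤ D^2 := by
    have := hdiam' y hy p
    nlinarith [norm_nonneg (y - x p)]
  have hnn : 0 ≤ ‖y - x (m+1)‖^2 := by positivity
  have hmain : 2 * S1 * ⟪V y, xavg - y⟫ ≤ (1 + L^2 * S2) * D^2 := by
    rw [hinner]
    have h0 : 2 * S1 * ((1 / S1) * ∑ i ∈ Finset.Icc p m, h i * ⟪V y, x (i+1) - y⟫)
        = ∑ i ∈ Finset.Icc p m, 2 * (h i * ⟪V y, x (i+1) - y⟫) := by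
      rw [← Finset.mul_sum]
      field_simp
    rw [h0]
    nlinarith [hsum]
  rw [le_div_iff₀ (by positivity : (0:ℝ) < 2 * S1)]
  nlinarith [hmain]
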